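/- arXiv:math/0407179 — 2 statements merged into one kernel-verified Lean document; each statement's English description precedes it below -/
import Mathlib

section
/- For coprime positive integers p and q, the generalized Dedekind sums satisfy the reciprocity law s(p,q,1) + s(q,p,1) = -1/4 + (p² + q² + 1)/(12 p q). -/
open Finset Real

/-- Generalized Dedekind cotangent sum s(α,β,γ). -/
noncomputable def dsum (a : ℕ) (b c : ℤ) : ℝ :=
  (1 / (4 * (a : ℝ))) *
    ∑ k ∈ Finset.Ico 1 a,
      Real.cot ((k : ℝ) * (b : ℝ) * Real.pi / (a : ℝ)) *
      Real.cot ((k : ℝ) * (c : ℝ) * Real.pi / (a : ℝ))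

open Polynomial

theorem my_derivative_prod {ι : Type*} [DecidableEq ι] (s : Finset ι) (f : ι → ℂ[X]) :
    derivative (∏ i ∈ s, f i) = ∑ i ∈ s, (∏ j ∈ s.erase i, f j) * derivative (f i) := by
  induction s using Finset.induction_on with
  | empty => simp
  | insert a s ha ih =>
    rw [Finset.prod_insert ha, derivative_mul, ih, Finset.sum_insert ha,
      Finset.erase_insert ha, Finset.mul_sum, mul_comm (derivative (f a))]
    congr 1
    apply Finset.sum_congr rfl
    intro i hi
    rw [Finset.erase_insert_of_ne (by rintro rfl; exact ha hi),
      Finset.prod_insert (fun h => ha (Finset.mem_of_mem_erase h)), mul_assoc]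

theorem deriv_X_sub_C_prod {ι : Type*} [DecidableEq ι] (s : Finset ι) (a : ι → ℂ) :
    derivative (∏ i ∈ s, (X - C (a i))) = ∑ i ∈ s, ∏ j ∈ s.erase i, (X - C (a j)) := by
  rw [my_derivative_prod]
  simp

theorem sum_inv_eq {ι : Type*} [DecidableEq ι] (s : Finset ι) (a : ι → ℂ) (u : ℂ)
    (h : ∀ i ∈ s, u - a i ≠ 0) :
    ∑ i ∈ s, (u - a i)⁻¹ =
      eval u (derivative (∏ i ∈ s, (X - C (a i)))) / eval u (∏ i ∈ s, (X - C (a i))) := by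
  have hP : eval u (∏ i ∈ s, (X - C (a i))) = ∏ i ∈ s, (u - a i) := by
    simp [eval_prod]
  have hPne : (∏ i ∈ s, (u - a i)) ≠ 0 := Finset.prod_ne_zero_iff.2 h
  rw [deriv_X_sub_C_prod, eval_finset_sum, hP, eq_div_iff hPne, Finset.sum_mul]
  refine Finset.sum_congr rfl fun i hi => ?_
  have : eval u (∏ j ∈ s.erase i, (X - C (a j))) = ∏ j ∈ s.erase i, (u - a j) := by
    simp [eval_prod]
  rw [this, ← Finset.mul_prod_erase s _ hi, ← mul_assoc,
    inv_mul_cancel₀ (h i hi), one_mul]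

theorem sum_inv_sq_eq {ι : Type*} [DecidableEq ι] (s : Finset ι) (a : ι → ℂ) (u : ℂ)
    (h : ∀ i ∈ s, u - a i ≠ 0) :
    ∑ i ∈ s, ((u - a i)⁻¹) ^ 2 =
      (∑ i ∈ s, (u - a i)⁻¹) ^ 2 -
        eval u (derivative (derivative (∏ i ∈ s, (X - C (a i))))) /
          eval u (∏ i ∈ s, (X - C (a i))) := by
  have hP : eval u (∏ i ∈ s, (X - C (a i))) = ∏ i ∈ s, (u - a i) := by simp [eval_prod]
  have hPne : (∏ i ∈ s, (u - a i)) ≠ 0 := Finset.prod_ne_zero_iff.2 h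
  have key : eval u (derivative (derivative (∏ i ∈ s, (X - C (a i))))) =
      (∏ i ∈ s, (u - a i)) *
        ∑ i ∈ s, (u - a i)⁻¹ * ((∑ j ∈ s, (u - a j)⁻¹) - (u - a i)⁻¹) := by
    rw [deriv_X_sub_C_prod, map_sum, eval_finset_sum]
    rw [Finset.mul_sum]
    refine Finset.sum_congr rfl fun i hi => ?_
    rw [deriv_X_sub_C_prod, eval_finset_sum]
    have herase : ∀ j ∈ s.erase i, eval u (∏ k ∈ (s.erase i).erase j, (X - C (a k))) =
        (∏ k ∈ s, (u - a k)) * ((u - a i)⁻¹ * (u - a j)⁻¹) := by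
      intro j hj
      have h1 : (u - a j) * ∏ k ∈ (s.erase i).erase j, (u - a k) = ∏ k ∈ s.erase i, (u - a k) :=
        Finset.mul_prod_erase (s.erase i) (fun k => u - a k) hj
      have h2 : (u - a i) * ∏ k ∈ s.erase i, (u - a k) = ∏ k ∈ s, (u - a k) :=
        Finset.mul_prod_erase s (fun k => u - a k) hi
      have hi0 := h i hi
      have hj0 := h j (Finset.mem_of_mem_erase hj)
      simp only [eval_prod, eval_sub, eval_X, eval_C]
      rw [← h2, ← h1]
      field_simp
    rw [Finset.sum_congr rfl herase, ← Finset.mul_sum, ← Finset.mul_sum]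
    rw [Finset.sum_erase_eq_sub hi]
    try ring
  rw [hP, key, mul_comm, mul_div_assoc, div_self hPne, mul_one]
  have e1 : ∑ i ∈ s, (u - a i)⁻¹ * ((∑ j ∈ s, (u - a j)⁻¹) - (u - a i)⁻¹) =
      (∑ i ∈ s, (u - a i)⁻¹) * (∑ j ∈ s, (u - a j)⁻¹) - ∑ i ∈ s, ((u - a i)⁻¹) ^ 2 := by
    simp [mul_sub, Finset.sum_sub_distrib, ← Finset.sum_mul, sq]
  rw [e1]
  try ring
  

section Roots
variable {n : ℕ} {ζ : ℂ}

theorem img_eq (hn : 0 < n) (hζ : IsPrimitiveRoot ζ n) :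
    (Finset.range n).image (ζ ^ ·) = nthRootsFinset n (1 : ℂ) := by
  apply Finset.eq_of_subset_of_card_le
  · intro z hz
    simp only [Finset.mem_image, Finset.mem_range] at hz
    obtain ⟨k, _, rfl⟩ := hz
    rw [Polynomial.mem_nthRootsFinset hn, ← pow_mul, mul_comm, pow_mul, hζ.pow_eq_one, one_pow]
  · rw [hζ.card_nthRootsFinset, Finset.card_image_of_injOn, Finset.card_range]
    intro i hi j hj hij
    exact hζ.pow_inj (Finset.mem_range.1 hi) (Finset.mem_range.1 hj) hij

theorem K1 (hn : 0 < n) (hζ : IsPrimitiveRoot ζ n) :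
    (X : ℂ[X]) ^ n - 1 = ∏ l ∈ Finset.range n, (X - C (ζ ^ l)) := by
  rw [X_pow_sub_one_eq_prod hn hζ, ← img_eq hn hζ, Finset.prod_image]
  intro i hi j hj hij
  exact hζ.pow_inj (Finset.mem_range.1 hi) (Finset.mem_range.1 hj) hij

theorem CORE (hn : 0 < n) (hζ : IsPrimitiveRoot ζ n) {u : ℂ} (hu : u ^ n ≠ 1) :
    ∑ l ∈ Finset.range n, (u - ζ ^ l)⁻¹ = n * u ^ (n - 1) / (u ^ n - 1) := by
  have hne : ∀ l ∈ Finset.range n, u - ζ ^ l ≠ 0 := by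
    intro l hl h0
    apply hu
    rw [show u = ζ ^ l by linear_combination h0, ← pow_mul, mul_comm, pow_mul, hζ.pow_eq_one,
      one_pow]
  rw [sum_inv_eq _ _ _ hne, ← K1 hn hζ]
  have hder : derivative ((X : ℂ[X]) ^ n - 1) = C (n : ℂ) * X ^ (n - 1) := by
    simp [derivative_X_pow]
  rw [hder]
  simp

theorem CORE2 (hn : 0 < n) (hζ : IsPrimitiveRoot ζ n) {u : ℂ} (hu : u ^ n ≠ 1) :
    ∑ l ∈ Finset.range n, (u * ζ ^ l - 1)⁻¹ = n / (u ^ n - 1) := by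
  have hne : ∀ z ∈ nthRootsFinset n (1 : ℂ), u - z ≠ 0 := by
    intro z hz h0
    apply hu
    rw [show u = z by linear_combination h0, (Polynomial.mem_nthRootsFinset hn _).1 hz]
  have himg : ∑ l ∈ Finset.range n, (u * ζ ^ l - 1)⁻¹ = ∑ z ∈ nthRootsFinset n (1 : ℂ), (u * z - 1)⁻¹ := by
    rw [← img_eq hn hζ, Finset.sum_image]
    intro i hi j hj hij
    exact hζ.pow_inj (Finset.mem_range.1 hi) (Finset.mem_range.1 hj) hij
  have hinv : ∑ z ∈ nthRootsFinset n (1 : ℂ), (u * z - 1)⁻¹ =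
      ∑ z ∈ nthRootsFinset n (1 : ℂ), (u * z⁻¹ - 1)⁻¹ := by
    apply Finset.sum_nbij' (fun z => z⁻¹) (fun z => z⁻¹)
    · intro z hz
      rw [Polynomial.mem_nthRootsFinset hn] at *
      rw [inv_pow, hz, inv_one]
    · intro z hz
      rw [Polynomial.mem_nthRootsFinset hn] at *
      rw [inv_pow, hz, inv_one]
    · intro z hz; simp
    · intro z hz; simp
    · intro z hz
      rw [inv_inv]
  have hstep : ∀ z ∈ nthRootsFinset n (1 : ℂ), (u * z⁻¹ - 1)⁻¹ = u * (u - z)⁻¹ - 1 := by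
    intro z hz
    have hz0 : z ≠ 0 := Polynomial.ne_zero_of_mem_nthRootsFinset one_ne_zero hz
    have huz := hne z hz
    field_simp
    try ring
  rw [himg, hinv, Finset.sum_congr rfl hstep, Finset.sum_sub_distrib, ← Finset.mul_sum]
  have : ∑ z ∈ nthRootsFinset n (1 : ℂ), (u - z)⁻¹ = ∑ l ∈ Finset.range n, (u - ζ ^ l)⁻¹ := by
    rw [← img_eq hn hζ, Finset.sum_image]
    intro i hi j hj hij
    exact hζ.pow_inj (Finset.mem_range.1 hi) (Finset.mem_range.1 hj) hij
  rw [this, CORE hn hζ hu, Finset.sum_const, hζ.card_nthRootsFinset, nsmul_eq_mul, mul_one]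
  have h1 : u ^ n - 1 ≠ 0 := sub_ne_zero.2 hu
  have hh : u ^ (n - 1) * u = u ^ n := by
    rw [← pow_succ, Nat.sub_add_cancel hn]
  field_simp
  linear_combination (n : ℂ) * hh
end Roots

section GaussSums

theorem sum_cast_id (p : ℕ) : ∑ j ∈ Finset.range p, (j : ℂ) = p * (p - 1) / 2 := by
  induction p with
  | zero => norm_num
  | succ p ih =>
    rw [Finset.sum_range_succ, ih]
    push_cast
    ring

theorem sum_jj (p : ℕ) :
    ∑ j ∈ Finset.range p, (j : ℂ) * ((j - 1 : ℕ) : ℂ) = p * (p - 1) * (p - 2) / 3 := by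
  induction p with
  | zero => norm_num
  | succ p ih =>
    rw [Finset.sum_range_succ, ih]
    rcases Nat.eq_zero_or_pos p with rfl | hp
    · norm_num
    · have h1 : ((p - 1 : ℕ) : ℂ) = (p : ℂ) - 1 := by
        push_cast [Nat.cast_sub hp]
        ring
      rw [h1]
      push_cast
      ring

end GaussSums

section S12
variable {p : ℕ} {ω : ℂ}

theorem K2 (hp : 0 < p) (hω : IsPrimitiveRoot ω p) :
    ∏ k ∈ Finset.Ico 1 p, (X - C (ω ^ k)) = ∑ j ∈ Finset.range p, (X : ℂ[X]) ^ j := by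
  have hins : Finset.range p = insert 0 (Finset.Ico 1 p) := by
    ext k
    simp only [Finset.mem_range, Finset.mem_insert, Finset.mem_Ico]
    omega
  have h0 : (0 : ℕ) ∉ Finset.Ico 1 p := by simp
  have hXone : (X - 1 : ℂ[X]) ≠ 0 := by
    simpa using Polynomial.X_sub_C_ne_zero (1 : ℂ)
  apply mul_left_cancel₀ hXone
  have hgeom := mul_geom_sum (X : ℂ[X]) p
  rw [hgeom, K1 hp hω, hins, Finset.prod_insert h0]
  simp

theorem hne_one (hω : IsPrimitiveRoot ω p) :
    ∀ k ∈ Finset.Ico 1 p, (1 : ℂ) - ω ^ k ≠ 0 := by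
  intro k hk h0
  rw [Finset.mem_Ico] at hk
  exact hω.pow_ne_one_of_pos_of_lt (by omega) hk.2 (by linear_combination -h0)

theorem eval_one_geom (p : ℕ) : eval 1 (∑ j ∈ Finset.range p, (X : ℂ[X]) ^ j) = p := by
  simp

theorem eval_one_dgeom (p : ℕ) :
    eval 1 (derivative (∑ j ∈ Finset.range p, (X : ℂ[X]) ^ j)) = p * (p - 1) / 2 := by
  rw [map_sum]
  simp only [derivative_X_pow]
  rw [eval_finset_sum]
  simp only [eval_mul, eval_C, eval_pow, eval_X, one_pow, mul_one]
  exact sum_cast_id p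

theorem eval_one_ddgeom (p : ℕ) :
    eval 1 (derivative (derivative (∑ j ∈ Finset.range p, (X : ℂ[X]) ^ j))) =
      p * (p - 1) * (p - 2) / 3 := by
  rw [map_sum]
  simp only [derivative_X_pow]
  rw [map_sum]
  simp only [derivative_C_mul, derivative_X_pow]
  rw [eval_finset_sum]
  simp only [eval_mul, eval_C, eval_pow, eval_X, one_pow, mul_one]
  exact sum_jj p

theorem S1c (hp : 0 < p) (hω : IsPrimitiveRoot ω p) :
    ∑ k ∈ Finset.Ico 1 p, ((1 : ℂ) - ω ^ k)⁻¹ = ((p : ℂ) - 1) / 2 := by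
  rw [sum_inv_eq _ _ _ (hne_one hω), K2 hp hω, eval_one_geom, eval_one_dgeom]
  have hp0 : (p : ℂ) ≠ 0 := Nat.cast_ne_zero.2 hp.ne'
  field_simp

theorem S2c (hp : 0 < p) (hω : IsPrimitiveRoot ω p) :
    ∑ k ∈ Finset.Ico 1 p, (((1 : ℂ) - ω ^ k)⁻¹) ^ 2 =
      (((p : ℂ) - 1) / 2) ^ 2 - ((p : ℂ) - 1) * ((p : ℂ) - 2) / 3 := by
  rw [sum_inv_sq_eq _ _ _ (hne_one hω), S1c hp hω, K2 hp hω, eval_one_geom, eval_one_ddgeom]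
  have hp0 : (p : ℂ) ≠ 0 := Nat.cast_ne_zero.2 hp.ne'
  field_simp
end S12

section Trig
open Complex in
theorem sin_eq' (x : ℂ) :
    Complex.sin x = (Complex.exp (x * I))⁻¹ * (1 - Complex.exp (2 * I * x)) * I / 2 := by
  have h2 : Complex.exp (2 * I * x) = Complex.exp (x * I) * Complex.exp (x * I) := by
    rw [← Complex.exp_add]; ring_nf
  rw [Complex.sin, show -x*I = -(x*I) by ring, Complex.exp_neg, h2]
  have he := Complex.exp_ne_zero (x * I)
  field_simp
  try ring

open Complex in
theorem cos_eq' (x : ℂ) :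
    Complex.cos x = (Complex.exp (x * I))⁻¹ * (1 + Complex.exp (2 * I * x)) / 2 := by
  have h2 : Complex.exp (2 * I * x) = Complex.exp (x * I) * Complex.exp (x * I) := by
    rw [← Complex.exp_add]; ring_nf
  rw [Complex.cos, show -x*I = -(x*I) by ring, Complex.exp_neg, h2]
  have he := Complex.exp_ne_zero (x * I)
  field_simp
  ring

open Complex in
theorem sin_ne_zero_iff' (x : ℂ) : Complex.sin x ≠ 0 ↔ Complex.exp (2 * I * x) ≠ 1 := by
  rw [sin_eq']
  have he := Complex.exp_ne_zero (x * I)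
  constructor
  · intro h h1
    rw [h1] at h
    simp at h
  · intro h h0
    apply h
    field_simp at h0
    rw [mul_zero, mul_comm, show x * I * 2 = 2 * I * x by ring] at h0
    rcases mul_eq_zero.1 h0 with h1 | h1
    · linear_combination -h1
    · exact absurd h1 Complex.I_ne_zero

open Complex in
theorem cot_eq' (x : ℂ) (hz : Complex.exp (2 * I * x) ≠ 1) :
    Complex.cot x = I * (Complex.exp (2 * I * x) + 1) / (Complex.exp (2 * I * x) - 1) := by
  have hsin : Complex.sin x ≠ 0 := (sin_ne_zero_iff' x).2 hz
  have he := Complex.exp_ne_zero (x * I)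
  have hz' : Complex.exp (2 * I * x) - 1 ≠ 0 := sub_ne_zero.2 hz
  have hz'' : (1 : ℂ) - Complex.exp (2 * I * x) ≠ 0 := fun h => hz (by linear_combination -h)
  rw [Complex.cot_eq_cos_div_sin, sin_eq', cos_eq']
  rw [div_eq_div_iff (by rw [← sin_eq']; exact hsin) hz']
  field_simp
  rw [show x * I * 2 = 2 * I * x by ring]
  linear_combination ((Complex.exp (2*I*x))^2 - 1) * Complex.I_sq
end Trig

section Mult
open Complex in
theorem cot_mult (q : ℕ) (hq : 0 < q) (θ : ℝ) (h : Real.sin (q * θ) ≠ 0) :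
    ∑ l ∈ Finset.range q, Real.cot (θ + Real.pi * l / q) = q * Real.cot (q * θ) := by
  have hℂ : ∑ l ∈ Finset.range q, Complex.cot ((θ : ℂ) + (Real.pi : ℂ) * l / q)
      = q * Complex.cot ((q : ℂ) * θ) := by
    set ζ : ℂ := Complex.exp (2 * Real.pi * I / q) with hζdef
    have hζ : IsPrimitiveRoot ζ q := Complex.isPrimitiveRoot_exp q hq.ne'
    set u : ℂ := Complex.exp (2 * I * θ) with hudef
    have hqθ : Complex.exp (2 * I * ((q : ℂ) * θ)) = u ^ q := by
      rw [hudef, ← Complex.exp_nat_mul]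
      congr 1
      ring
    have hu : u ^ q ≠ 1 := by
      rw [← hqθ]
      have hs : Complex.sin ((q : ℂ) * θ) ≠ 0 := by
        have : ((q : ℂ) * θ) = ((q * θ : ℝ) : ℂ) := by push_cast; ring
        rw [this, ← Complex.ofReal_sin]
        exact_mod_cast Complex.ofReal_ne_zero.2 h
      exact (sin_ne_zero_iff' _).1 hs
    have hexp : ∀ l : ℕ, Complex.exp (2 * I * ((θ : ℂ) + (Real.pi : ℂ) * l / q)) = u * ζ ^ l := by
      intro l
      rw [hudef, hζdef, ← Complex.exp_nat_mul, ← Complex.exp_add]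
      congr 1
      ring
    have huζ : ∀ l : ℕ, u * ζ ^ l ≠ 1 := by
      intro l h1
      apply hu
      have : (u * ζ ^ l) ^ q = u ^ q := by
        rw [mul_pow, ← pow_mul, mul_comm l q, pow_mul, hζ.pow_eq_one, one_pow, mul_one]
      rw [← this, h1, one_pow]
    have hterm : ∀ l ∈ Finset.range q, Complex.cot ((θ : ℂ) + (Real.pi : ℂ) * l / q)
        = I + 2 * I * (u * ζ ^ l - 1)⁻¹ := by
      intro l _
      rw [cot_eq' _ (by rw [hexp l]; exact huζ l), hexp l]
      have h1 : u * ζ ^ l - 1 ≠ 0 := sub_ne_zero.2 (huζ l)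
      field_simp
      ring
    rw [Finset.sum_congr rfl hterm, Finset.sum_add_distrib, Finset.sum_const,
      Finset.card_range, ← Finset.mul_sum, CORE2 hq hζ hu]
    rw [cot_eq' _ (by rw [hqθ]; exact hu), hqθ]
    have h1 : u ^ q - 1 ≠ 0 := sub_ne_zero.2 hu
    field_simp
    ring
  have : ((∑ l ∈ Finset.range q, Real.cot (θ + Real.pi * l / q) : ℝ) : ℂ)
      = ((q * Real.cot (q * θ) : ℝ) : ℂ) := by
    push_cast [Complex.ofReal_cot]
    rw [← hℂ]
  exact_mod_cast this
end Mult

section CotSq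
open Complex in
theorem cot_sq_sum (p : ℕ) (hp : 0 < p) :
    ∑ k ∈ Finset.Ico 1 p, (Real.cot (Real.pi * k / p)) ^ 2
      = ((p : ℝ) - 1) * ((p : ℝ) - 2) / 3 := by
  have hℂ : ∑ k ∈ Finset.Ico 1 p, (Complex.cot ((Real.pi : ℂ) * k / p)) ^ 2
      = ((p : ℂ) - 1) * ((p : ℂ) - 2) / 3 := by
    set ω : ℂ := Complex.exp (2 * Real.pi * I / p) with hωdef
    have hω : IsPrimitiveRoot ω p := Complex.isPrimitiveRoot_exp p hp.ne'
    have hexp : ∀ k : ℕ, Complex.exp (2 * I * ((Real.pi : ℂ) * k / p)) = ω ^ k := by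
      intro k
      rw [hωdef, ← Complex.exp_nat_mul]
      congr 1
      ring
    have hterm : ∀ k ∈ Finset.Ico 1 p, (Complex.cot ((Real.pi : ℂ) * k / p)) ^ 2
        = -1 + 4 * ((1 : ℂ) - ω ^ k)⁻¹ - 4 * (((1 : ℂ) - ω ^ k)⁻¹) ^ 2 := by
      intro k hk
      rw [Finset.mem_Ico] at hk
      have hωk : ω ^ k ≠ 1 := hω.pow_ne_one_of_pos_of_lt (by omega) hk.2
      have h1 : ω ^ k - 1 ≠ 0 := sub_ne_zero.2 hωk
      have h2 : (1 : ℂ) - ω ^ k ≠ 0 := fun h => hωk (by linear_combination -h)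
      rw [cot_eq' _ (by rw [hexp k]; exact hωk), hexp k]
      field_simp
      linear_combination (1 - 2*(ω^k)^2 + (ω^k)^4) * Complex.I_sq
    rw [Finset.sum_congr rfl hterm]
    simp only [Finset.sum_add_distrib, Finset.sum_sub_distrib, Finset.sum_const,
      ← Finset.mul_sum, Nat.card_Ico]
    rw [S1c hp hω, S2c hp hω]
    have hcard : ((p - 1 : ℕ) : ℂ) = (p : ℂ) - 1 := by
      push_cast [Nat.cast_sub hp]
      ring
    rw [nsmul_eq_mul, hcard]
    ring
  have : ((∑ k ∈ Finset.Ico 1 p, (Real.cot (Real.pi * k / p)) ^ 2 : ℝ) : ℂ)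
      = ((((p : ℝ) - 1) * ((p : ℝ) - 2) / 3 : ℝ) : ℂ) := by
    push_cast [Complex.ofReal_cot]
    rw [hℂ]
  exact_mod_cast this
end CotSq

section RealLemmas

theorem cot_reflect_sum (p : ℕ) :
    ∑ k ∈ Finset.Ico 1 p, Real.cot (Real.pi * k / p) = 0 := by
  have key : ∑ k ∈ Finset.Ico 1 p, Real.cot (Real.pi * k / p)
      = ∑ k ∈ Finset.Ico 1 p, -Real.cot (Real.pi * k / p) := by
    rw [show ∑ k ∈ Finset.Ico 1 p, -Real.cot (Real.pi * k / p)
        = ∑ k ∈ Finset.Ico 1 p, Real.cot (Real.pi * (p - k : ℕ) / p) from ?_]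
    · apply Finset.sum_nbij' (fun k => p - k) (fun k => p - k)
      · intro k hk; rw [Finset.mem_Ico] at *; omega
      · intro k hk; rw [Finset.mem_Ico] at *; omega
      · intro k hk; rw [Finset.mem_Ico] at hk; omega
      · intro k hk; rw [Finset.mem_Ico] at hk; omega
      · intro k hk
        rw [Finset.mem_Ico] at hk
        have hkk : p - (p - k) = k := by omega
        rw [hkk]
    · apply Finset.sum_congr rfl
      intro k hk
      rw [Finset.mem_Ico] at hk
      have hcast : ((p - k : ℕ) : ℝ) = (p : ℝ) - k := by
        push_cast [Nat.cast_sub hk.2.le]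
        ring
      have harg : Real.pi * ((p - k : ℕ) : ℝ) / p = Real.pi - Real.pi * k / p := by
        rw [hcast]
        have hp0 : (p : ℝ) ≠ 0 := Nat.cast_ne_zero.2 (by omega)
        field_simp
      rw [harg, Real.cot_eq_cos_div_sin, Real.cot_eq_cos_div_sin, Real.cos_pi_sub,
        Real.sin_pi_sub, neg_div]
  have key2 : ∑ k ∈ Finset.Ico 1 p, Real.cot (Real.pi * k / p)
      = -∑ k ∈ Finset.Ico 1 p, Real.cot (Real.pi * k / p) := by
    nth_rewrite 1 [key]
    rw [← Finset.sum_neg_distrib]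
  linarith [key2]

theorem three_term {x y : ℝ} (hx : Real.sin x ≠ 0) (hy : Real.sin y ≠ 0)
    (hxy : Real.sin (x + y) ≠ 0) :
    Real.cot x * Real.cot y = 1 + Real.cot (x + y) * (Real.cot x + Real.cot y) := by
  rw [Real.cot_eq_cos_div_sin, Real.cot_eq_cos_div_sin, Real.cot_eq_cos_div_sin]
  field_simp
  rw [Real.sin_add, Real.cos_add]
  ring

end RealLemmas


section Assembly

theorem cot_congr {x y : ℝ} (h : x = y) : Real.cot x = Real.cot y := by rw [h]

theorem sin_ratio_ne (a b : ℕ) (hb : 0 < b) (hnd : ¬ (b ∣ a)) :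
    Real.sin (Real.pi * a / b) ≠ 0 := by
  intro h0
  obtain ⟨n, hn⟩ := Real.sin_eq_zero_iff.1 h0
  have hb0 : (b : ℝ) ≠ 0 := Nat.cast_ne_zero.2 hb.ne'
  have hπ : Real.pi ≠ 0 := Real.pi_ne_zero
  have h1 : (n : ℝ) * b = a := by
    have hn' : (n : ℝ) * Real.pi * b = Real.pi * a := by
      field_simp at hn ⊢
      linear_combination hn
    have h2 : Real.pi * ((n : ℝ) * b) = Real.pi * a := by linear_combination hn'
    exact mul_left_cancel₀ hπ h2
  have h2 : (n * b : ℤ) = (a : ℤ) := by exact_mod_cast h1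
  apply hnd
  have hdvd : (b : ℤ) ∣ (a : ℤ) := ⟨n, by linear_combination -h2⟩
  exact_mod_cast hdvd

theorem sin_pos_ratio {a b : ℕ} (ha : 1 ≤ a) (hab : a < b) :
    Real.sin (Real.pi * a / b) ≠ 0 := by
  have hπ := Real.pi_pos
  have hb' : 0 < b := lt_of_le_of_lt (Nat.zero_le a) hab
  have hb0 : (0 : ℝ) < b := by exact_mod_cast hb'
  have ha0 : (0 : ℝ) < a := by exact_mod_cast ha
  have hab' : (a : ℝ) < b := by exact_mod_cast hab
  apply ne_of_gt
  apply Real.sin_pos_of_pos_of_lt_pi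
  · exact div_pos (mul_pos hπ ha0) hb0
  · rw [div_lt_iff₀ hb0]
    nlinarith

theorem range_eq_insert (q : ℕ) (hq : 0 < q) :
    Finset.range q = insert 0 (Finset.Ico 1 q) := by
  ext k
  simp only [Finset.mem_range, Finset.mem_insert, Finset.mem_Ico]
  omega

end Assembly

theorem dsum_reciprocity (p q : ℕ) (hp : 1 ≤ p) (hq : 1 ≤ q)
    (hpq : Nat.Coprime p q) :
    dsum p q 1 + dsum q p 1 =
      -1 / 4 + ((p : ℝ) ^ 2 + (q : ℝ) ^ 2 + 1) / (12 * (p : ℝ) * (q : ℝ)) := by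
  have hp' : 0 < p := hp
  have hq' : 0 < q := hq
  have hp0 : (0 : ℝ) < p := by exact_mod_cast hp'
  have hq0 : (0 : ℝ) < q := by exact_mod_cast hq'
  have hπ := Real.pi_pos
  have hknd : ∀ k, 1 ≤ k → k < p → ¬ (p ∣ k * q) := by
    intro k h1 h2 hdvd
    have h3 := hpq.dvd_of_dvd_mul_right hdvd
    have := Nat.le_of_dvd h1 h3
    omega
  have hlnd : ∀ l, 1 ≤ l → l < q → ¬ (q ∣ l * p) := by
    intro l h1 h2 hdvd
    have h3 := hpq.symm.dvd_of_dvd_mul_right hdvd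
    have := Nat.le_of_dvd h1 h3
    omega
  have hsa : ∀ k ∈ Finset.Ico 1 p, Real.sin (Real.pi * k / p) ≠ 0 := by
    intro k hk; rw [Finset.mem_Ico] at hk; exact sin_pos_ratio hk.1 hk.2
  have hsb : ∀ l ∈ Finset.Ico 1 q, Real.sin (Real.pi * l / q) ≠ 0 := by
    intro l hl; rw [Finset.mem_Ico] at hl; exact sin_pos_ratio hl.1 hl.2
  have hsab : ∀ k ∈ Finset.Ico 1 p, ∀ l ∈ Finset.Ico 1 q,
      Real.sin (Real.pi * k / p + Real.pi * l / q) ≠ 0 := by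
    intro k hk l hl
    rw [Finset.mem_Ico] at hk hl
    have harg : Real.pi * k / p + Real.pi * l / q
        = Real.pi * ((k * q + l * p : ℕ) : ℝ) / ((p * q : ℕ) : ℝ) := by
      push_cast
      field_simp
    rw [harg]
    apply sin_ratio_ne _ _ (Nat.mul_pos hp' hq')
    intro hdvd
    have hub : k * q + l * p < 2 * (p * q) := by
      have h1 : k * q ≤ (p - 1) * q := Nat.mul_le_mul_right _ (by omega)
      have h2 : l * p ≤ (q - 1) * p := Nat.mul_le_mul_right _ (by omega)
      have e1 : (p - 1) * q = p * q - q := by rw [Nat.sub_mul, one_mul]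
      have e2 : (q - 1) * p = q * p - p := by rw [Nat.sub_mul, one_mul]
      have hqle : q ≤ p * q := Nat.le_mul_of_pos_left q hp'
      have hple : p ≤ q * p := Nat.le_mul_of_pos_left p hq'
      have hcomm : q * p = p * q := Nat.mul_comm q p
      omega
    have hlb : 0 < k * q + l * p :=
      Nat.add_pos_left (Nat.mul_pos (by omega) hq') _
    obtain ⟨c, hc⟩ := hdvd
    rw [hc] at hub hlb
    have hc0 : c ≠ 0 := by rintro rfl; simp at hlb
    have hclt : c < 2 := by
      rw [show 2 * (p * q) = p * q * 2 by ring] at hub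
      exact Nat.lt_of_mul_lt_mul_left hub
    have hc2 : c = 1 := by omega
    rw [hc2, mul_one] at hc
    apply hknd k hk.1 hk.2
    have hcz : ((k : ℤ) * q + l * p) = (p : ℤ) * q := by exact_mod_cast hc
    have hdvdz : (p : ℤ) ∣ (k : ℤ) * q := ⟨(q : ℤ) - l, by linear_combination hcz⟩
    have hdvdz' : (p : ℤ) ∣ ((k * q : ℕ) : ℤ) := by push_cast; exact hdvdz
    exact_mod_cast hdvdz'
  have hM1 : ∀ k ∈ Finset.Ico 1 p,
      ∑ l ∈ Finset.Ico 1 q, Real.cot (Real.pi * k / p + Real.pi * l / q)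
        = q * Real.cot (Real.pi * (k * q) / p) - Real.cot (Real.pi * k / p) := by
    intro k hk
    rw [Finset.mem_Ico] at hk
    have hs : Real.sin ((q : ℝ) * (Real.pi * k / p)) ≠ 0 := by
      have harg : (q : ℝ) * (Real.pi * k / p) = Real.pi * ((k * q : ℕ) : ℝ) / p := by
        push_cast; ring
      rw [harg]
      exact sin_ratio_ne _ _ hp' (hknd k hk.1 hk.2)
    have hmult := cot_mult q hq' (Real.pi * k / p) hs
    rw [range_eq_insert q hq', Finset.sum_insert (by simp)] at hmult
    have h00 : Real.cot (Real.pi * k / p + Real.pi * (0 : ℕ) / q) = Real.cot (Real.pi * k / p) := by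
      apply cot_congr; push_cast; ring
    have hcq : Real.cot ((q : ℝ) * (Real.pi * k / p)) = Real.cot (Real.pi * (k * q) / p) := by
      apply cot_congr; push_cast; field_simp
    rw [h00, hcq] at hmult
    linarith [hmult]
  have hM2 : ∀ l ∈ Finset.Ico 1 q,
      ∑ k ∈ Finset.Ico 1 p, Real.cot (Real.pi * k / p + Real.pi * l / q)
        = p * Real.cot (Real.pi * (l * p) / q) - Real.cot (Real.pi * l / q) := by
    intro l hl
    rw [Finset.mem_Ico] at hl
    have hs : Real.sin ((p : ℝ) * (Real.pi * l / q)) ≠ 0 := by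
      have harg : (p : ℝ) * (Real.pi * l / q) = Real.pi * ((l * p : ℕ) : ℝ) / q := by
        push_cast; ring
      rw [harg]
      exact sin_ratio_ne _ _ hq' (hlnd l hl.1 hl.2)
    have hmult := cot_mult p hp' (Real.pi * l / q) hs
    rw [range_eq_insert p hp', Finset.sum_insert (by simp)] at hmult
    have h00 : Real.cot (Real.pi * l / q + Real.pi * (0 : ℕ) / p) = Real.cot (Real.pi * l / q) := by
      apply cot_congr; push_cast; ring
    have hcq : Real.cot ((p : ℝ) * (Real.pi * l / q)) = Real.cot (Real.pi * (l * p) / q) := by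
      apply cot_congr; push_cast; field_simp
    rw [h00, hcq] at hmult
    have hsum : ∑ k ∈ Finset.Ico 1 p, Real.cot (Real.pi * k / p + Real.pi * l / q)
        = ∑ k ∈ Finset.Ico 1 p, Real.cot (Real.pi * l / q + Real.pi * k / p) := by
      apply Finset.sum_congr rfl
      intro k _
      apply cot_congr; ring
    rw [hsum]
    linarith [hmult]
  have hzero : ∑ k ∈ Finset.Ico 1 p, ∑ l ∈ Finset.Ico 1 q,
      Real.cot (Real.pi * k / p) * Real.cot (Real.pi * l / q) = 0 := by
    rw [← Finset.sum_mul_sum]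
    rw [cot_reflect_sum p, zero_mul]
  have hexp : ∑ k ∈ Finset.Ico 1 p, ∑ l ∈ Finset.Ico 1 q,
      Real.cot (Real.pi * k / p) * Real.cot (Real.pi * l / q)
    = ∑ k ∈ Finset.Ico 1 p, ∑ l ∈ Finset.Ico 1 q,
      (1 + Real.cot (Real.pi * k / p + Real.pi * l / q) *
        (Real.cot (Real.pi * k / p) + Real.cot (Real.pi * l / q))) := by
    apply Finset.sum_congr rfl
    intro k hk
    apply Finset.sum_congr rfl
    intro l hl
    exact three_term (hsa k hk) (hsb l hl) (hsab k hk l hl)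
  have hcardp : ((Finset.Ico 1 p).card : ℝ) = (p : ℝ) - 1 := by
    rw [Nat.card_Ico]
    push_cast [Nat.cast_sub hp]
    ring
  have hcardq : ((Finset.Ico 1 q).card : ℝ) = (q : ℝ) - 1 := by
    rw [Nat.card_Ico]
    push_cast [Nat.cast_sub hq]
    ring
  have hsplit : ∑ k ∈ Finset.Ico 1 p, ∑ l ∈ Finset.Ico 1 q,
      (1 + Real.cot (Real.pi * k / p + Real.pi * l / q) *
        (Real.cot (Real.pi * k / p) + Real.cot (Real.pi * l / q)))
    = ((p : ℝ) - 1) * ((q : ℝ) - 1)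
      + (∑ k ∈ Finset.Ico 1 p, ∑ l ∈ Finset.Ico 1 q,
          Real.cot (Real.pi * k / p + Real.pi * l / q) * Real.cot (Real.pi * k / p))
      + (∑ k ∈ Finset.Ico 1 p, ∑ l ∈ Finset.Ico 1 q,
          Real.cot (Real.pi * k / p + Real.pi * l / q) * Real.cot (Real.pi * l / q)) := by
    simp only [mul_add, Finset.sum_add_distrib]
    rw [Finset.sum_const, Finset.sum_const]
    simp only [nsmul_eq_mul]
    rw [hcardq, hcardp]
    ring
  have hT1 : ∑ k ∈ Finset.Ico 1 p, ∑ l ∈ Finset.Ico 1 q,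
      Real.cot (Real.pi * k / p + Real.pi * l / q) * Real.cot (Real.pi * k / p)
    = q * (∑ k ∈ Finset.Ico 1 p, Real.cot (Real.pi * (k * q) / p) * Real.cot (Real.pi * k / p))
      - ((p : ℝ) - 1) * ((p : ℝ) - 2) / 3 := by
    have h1 : ∀ k ∈ Finset.Ico 1 p, ∑ l ∈ Finset.Ico 1 q,
        Real.cot (Real.pi * k / p + Real.pi * l / q) * Real.cot (Real.pi * k / p)
        = (q * Real.cot (Real.pi * (k * q) / p) - Real.cot (Real.pi * k / p))
            * Real.cot (Real.pi * k / p) := by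
      intro k hk
      rw [← Finset.sum_mul, hM1 k hk]
    rw [Finset.sum_congr rfl h1, ← cot_sq_sum p hp', Finset.mul_sum, ← Finset.sum_sub_distrib]
    apply Finset.sum_congr rfl
    intro k _
    ring
  have hT2 : ∑ k ∈ Finset.Ico 1 p, ∑ l ∈ Finset.Ico 1 q,
      Real.cot (Real.pi * k / p + Real.pi * l / q) * Real.cot (Real.pi * l / q)
    = p * (∑ l ∈ Finset.Ico 1 q, Real.cot (Real.pi * (l * p) / q) * Real.cot (Real.pi * l / q))
      - ((q : ℝ) - 1) * ((q : ℝ) - 2) / 3 := by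
    rw [Finset.sum_comm]
    have h1 : ∀ l ∈ Finset.Ico 1 q, ∑ k ∈ Finset.Ico 1 p,
        Real.cot (Real.pi * k / p + Real.pi * l / q) * Real.cot (Real.pi * l / q)
        = (p * Real.cot (Real.pi * (l * p) / q) - Real.cot (Real.pi * l / q))
            * Real.cot (Real.pi * l / q) := by
      intro l hl
      rw [← Finset.sum_mul, hM2 l hl]
    rw [Finset.sum_congr rfl h1, ← cot_sq_sum q hq', Finset.mul_sum, ← Finset.sum_sub_distrib]
    apply Finset.sum_congr rfl
    intro l _
    ring
  have hD1 : ∑ k ∈ Finset.Ico 1 p, Real.cot (Real.pi * (k * q) / p) * Real.cot (Real.pi * k / p)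
      = 4 * p * dsum p q 1 := by
    rw [dsum, Finset.mul_sum, Finset.mul_sum]
    apply Finset.sum_congr rfl
    intro k _
    rw [show Real.cot ((k : ℝ) * ((q : ℤ) : ℝ) * Real.pi / p) = Real.cot (Real.pi * (k * q) / p) from
      cot_congr (by push_cast; ring)]
    rw [show Real.cot ((k : ℝ) * ((1 : ℤ) : ℝ) * Real.pi / p) = Real.cot (Real.pi * k / p) from
      cot_congr (by push_cast; ring)]
    field_simp
    try ring
  have hD2 : ∑ l ∈ Finset.Ico 1 q, Real.cot (Real.pi * (l * p) / q) * Real.cot (Real.pi * l / q)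
      = 4 * q * dsum q p 1 := by
    rw [dsum, Finset.mul_sum, Finset.mul_sum]
    apply Finset.sum_congr rfl
    intro l _
    rw [show Real.cot ((l : ℝ) * ((p : ℤ) : ℝ) * Real.pi / q) = Real.cot (Real.pi * (l * p) / q) from
      cot_congr (by push_cast; ring)]
    rw [show Real.cot ((l : ℝ) * ((1 : ℤ) : ℝ) * Real.pi / q) = Real.cot (Real.pi * l / q) from
      cot_congr (by push_cast; ring)]
    field_simp
    try ring
  have main : (0 : ℝ) = ((p : ℝ) - 1) * ((q : ℝ) - 1)
      + ((q : ℝ) * (4 * p * dsum p q 1) - ((p : ℝ) - 1) * ((p : ℝ) - 2) / 3)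
      + ((p : ℝ) * (4 * q * dsum q p 1) - ((q : ℝ) - 1) * ((q : ℝ) - 2) / 3) := by
    rw [← hD1, ← hD2, ← hT1, ← hT2, ← hsplit, ← hexp, hzero]
  have hpne : (p : ℝ) ≠ 0 := hp0.ne'
  have hqne : (q : ℝ) ≠ 0 := hq0.ne'
  field_simp
  linear_combination (-12 : ℝ) * main
end

section
/- For any positive integer p and integer q coprime to p, the cotangent sum (1/(4p)) ∑_{k=1}^{p-1} cot(kqπ/p) cot(kπ/p) is a rational number. -/
open Finset Real

open Finset Real

lemma aux_geom (z : ℂ) (n : ℕ) :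
    (z - 1) * ∑ j ∈ Finset.range n, (j : ℂ) * z ^ j
      = ((n : ℂ) - 1) * z ^ n - ∑ j ∈ Finset.range n, z ^ j + 1 := by
  induction n with
  | zero => simp
  | succ n ih =>
    rw [Finset.sum_range_succ, Finset.sum_range_succ (f := fun j => z ^ j), mul_add, ih]
    push_cast
    ring

lemma aux_inv {z : ℂ} {p : ℕ} (hp : p ≠ 0) (hz1 : z ≠ 1) (hzp : z ^ p = 1) :
    (z - 1)⁻¹ = (1 / (p : ℂ)) * ∑ j ∈ Finset.range p, (j : ℂ) * z ^ j := by
  have hg : ∑ j ∈ Finset.range p, z ^ j = 0 := by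
    rw [geom_sum_eq hz1, hzp]; simp
  have h := aux_geom z p
  rw [hzp, hg] at h
  have hz : z - 1 ≠ 0 := sub_ne_zero.mpr hz1
  have hpc : (p : ℂ) ≠ 0 := Nat.cast_ne_zero.mpr hp
  field_simp
  linear_combination -h

lemma cot_mul_cot {θ₁ θ₂ : ℂ} (h₁ : Complex.exp (2 * Complex.I * θ₁) ≠ 1)
    (h₂ : Complex.exp (2 * Complex.I * θ₂) ≠ 1) :
    Complex.cot θ₁ * Complex.cot θ₂ =
      -((Complex.exp (2 * Complex.I * θ₁) + 1) * (Complex.exp (2 * Complex.I * θ₂) + 1))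
        * (Complex.exp (2 * Complex.I * θ₁) - 1)⁻¹
        * (Complex.exp (2 * Complex.I * θ₂) - 1)⁻¹ := by
  rw [Complex.cot_eq_exp_ratio, Complex.cot_eq_exp_ratio]
  set a := Complex.exp (2 * Complex.I * θ₁) with ha
  set b := Complex.exp (2 * Complex.I * θ₂) with hb
  have ha1 : a - 1 ≠ 0 := sub_ne_zero.mpr h₁
  have hb1 : b - 1 ≠ 0 := sub_ne_zero.mpr h₂
  have ha1' : 1 - a ≠ 0 := fun h => ha1 (by linear_combination -h)
  have hb1' : 1 - b ≠ 0 := fun h => hb1 (by linear_combination -h)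
  field_simp
  ring_nf
  simp [Complex.I_sq]
  ring

lemma aux_E {p : ℕ} (hp : p ≠ 0) {ω : ℂ} (hω : IsPrimitiveRoot ω p) (n : ℤ) :
    ∑ k ∈ Finset.range p, ω ^ ((k : ℤ) * n) = if (p : ℤ) ∣ n then (p : ℂ) else 0 := by
  by_cases hd : (p : ℤ) ∣ n
  · have h1 : ω ^ n = 1 := (hω.zpow_eq_one_iff_dvd n).mpr hd
    simp only [if_pos hd]
    have : ∀ k ∈ Finset.range p, ω ^ ((k : ℤ) * n) = 1 := by
      intro k _
      rw [mul_comm, zpow_mul, h1, one_zpow]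
    rw [Finset.sum_congr rfl this]
    simp
  · have hx1 : ω ^ n ≠ 1 := fun h => hd ((hω.zpow_eq_one_iff_dvd n).mp h)
    have hxp : (ω ^ n) ^ p = 1 := by
      rw [← zpow_natCast (ω ^ n), ← zpow_mul, mul_comm, zpow_mul, zpow_natCast,
        hω.pow_eq_one, one_zpow]
    have : ∀ k ∈ Finset.range p, ω ^ ((k : ℤ) * n) = (ω ^ n) ^ k := by
      intro k _
      rw [mul_comm, zpow_mul, zpow_natCast]
    rw [Finset.sum_congr rfl this, geom_sum_eq hx1, hxp]
    simp [hd]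

lemma aux_sum_mul_sum (p : ℕ) (Y : ℂ) (F G : ℕ → ℂ) :
    Y * ((∑ j ∈ Finset.range p, F j) * (∑ l ∈ Finset.range p, G l))
      = ∑ j ∈ Finset.range p, ∑ l ∈ Finset.range p, Y * (F j * G l) := by
  rw [Finset.sum_mul_sum, Finset.mul_sum]
  exact Finset.sum_congr rfl fun j _ => by rw [Finset.mul_sum]

theorem dsum_rational' (p : ℕ) (hp : 1 ≤ p) (q : ℤ) (hq : IsCoprime q (p : ℤ)) :
    ∃ r : ℚ, (1 / (4 * (p : ℝ))) *
      ∑ k ∈ Finset.Ico 1 p,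
        Real.cot ((k : ℝ) * (q : ℝ) * Real.pi / (p : ℝ)) *
        Real.cot ((k : ℝ) * ((1:ℤ) : ℝ) * Real.pi / (p : ℝ)) = r := by
  have hp0 : p ≠ 0 := by omega
  have hpc : (p : ℂ) ≠ 0 := Nat.cast_ne_zero.mpr hp0
  have hω : IsPrimitiveRoot (Complex.exp (2 * Real.pi * Complex.I / p)) p :=
    Complex.isPrimitiveRoot_exp p hp0
  set ω : ℂ := Complex.exp (2 * Real.pi * Complex.I / p) with hωdef
  have hω0 : ω ≠ 0 := Complex.exp_ne_zero _
  -- exp of the cot arguments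
  have key : ∀ (n : ℤ) (k : ℕ),
      Complex.exp (2 * Complex.I * (((k : ℝ) * (n : ℝ) * Real.pi / p : ℝ) : ℂ))
        = ω ^ ((k : ℤ) * n) := by
    intro n k
    rw [hωdef, ← Complex.exp_int_mul]
    congr 1
    push_cast
    ring
  have hpow1 : ∀ n : ℤ, (ω ^ n) ^ p = 1 := by
    intro n
    rw [← zpow_natCast (ω ^ n), ← zpow_mul, mul_comm, zpow_mul, zpow_natCast,
      hω.pow_eq_one, one_zpow]
  -- the summand function after expansion
  set f : ℕ → ℕ → ℕ → ℂ := fun k j l =>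
    (-(1 : ℂ) / (p : ℂ) ^ 2) * (j : ℂ) * (l : ℂ) *
      (ω ^ ((k : ℤ) * (q * j + l + (q + 1))) + ω ^ ((k : ℤ) * (q * j + l + q))
        + ω ^ ((k : ℤ) * (q * j + l + 1)) + ω ^ ((k : ℤ) * (q * j + l))) with hfdef
  -- Claim A : per-k identity
  have claimA : ∀ k ∈ Finset.Ico 1 p,
      ((Real.cot ((k : ℝ) * (q : ℝ) * Real.pi / p) *
        Real.cot ((k : ℝ) * ((1:ℤ) : ℝ) * Real.pi / p) : ℝ) : ℂ)
        = ∑ j ∈ Finset.range p, ∑ l ∈ Finset.range p, f k j l := by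
    intro k hk
    rw [Finset.mem_Ico] at hk
    have hndvd : ¬ (p : ℤ) ∣ (k : ℤ) := by
      rw [Int.natCast_dvd_natCast]
      intro h
      have := Nat.le_of_dvd (by omega) h
      omega
    have hndvdq : ¬ (p : ℤ) ∣ (k : ℤ) * q := fun h => hndvd (hq.symm.dvd_of_dvd_mul_right h)
    have ha1 : ω ^ ((k : ℤ) * q) ≠ 1 := fun h => hndvdq ((hω.zpow_eq_one_iff_dvd _).mp h)
    have hb1 : ω ^ ((k : ℤ) * 1) ≠ 1 := by
      rw [mul_one]
      exact fun h => hndvd ((hω.zpow_eq_one_iff_dvd _).mp h)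
    have e1 : Complex.exp (2 * Complex.I * (((k : ℝ) * (q : ℝ) * Real.pi / p : ℝ) : ℂ)) ≠ 1 := by
      rw [key q k]; exact ha1
    have e2 : Complex.exp (2 * Complex.I * (((k : ℝ) * ((1:ℤ) : ℝ) * Real.pi / p : ℝ) : ℂ)) ≠ 1 := by
      rw [key 1 k]; exact hb1
    rw [Complex.ofReal_mul, Complex.ofReal_cot, Complex.ofReal_cot,
      cot_mul_cot e1 e2, key q k, key 1 k,
      aux_inv hp0 ha1 (hpow1 _), aux_inv hp0 hb1 (hpow1 _)]
    have : -((ω ^ ((k : ℤ) * q) + 1) * (ω ^ ((k : ℤ) * 1) + 1)) *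
        ((1 / (p : ℂ)) * ∑ j ∈ Finset.range p, (j : ℂ) * (ω ^ ((k : ℤ) * q)) ^ j) *
        ((1 / (p : ℂ)) * ∑ l ∈ Finset.range p, (l : ℂ) * (ω ^ ((k : ℤ) * 1)) ^ l)
        = (-((ω ^ ((k : ℤ) * q) + 1) * (ω ^ ((k : ℤ) * 1) + 1)) * (1 / (p : ℂ)) * (1 / (p : ℂ)))
          * ((∑ j ∈ Finset.range p, (j : ℂ) * (ω ^ ((k : ℤ) * q)) ^ j) *
             (∑ l ∈ Finset.range p, (l : ℂ) * (ω ^ ((k : ℤ) * 1)) ^ l)) := by ring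
    rw [this, aux_sum_mul_sum]
    refine Finset.sum_congr rfl fun j _ => Finset.sum_congr rfl fun l _ => ?_
    rw [hfdef]
    simp only [← zpow_natCast (ω ^ ((k : ℤ) * q)), ← zpow_natCast (ω ^ ((k : ℤ) * 1)),
      ← zpow_mul]
    simp only [mul_add, mul_one]
    simp only [zpow_add₀ hω0, zpow_mul, zpow_one]
    push_cast
    ring
  -- the full sum over range p is rational
  set F : Subfield ℂ := (Rat.castHom ℂ).fieldRange with hFdef
  have hE : ∀ n : ℤ, (∑ k ∈ Finset.range p, ω ^ ((k : ℤ) * n)) ∈ F := by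
    intro n
    rw [aux_E hp0 hω n]
    split
    · exact ⟨(p : ℚ), by push_cast; rfl⟩
    · exact ⟨0, by simp⟩
  have hc : ∀ j l : ℕ, ((-(1 : ℂ) / (p : ℂ) ^ 2) * (j : ℂ) * (l : ℂ)) ∈ F := by
    intro j l
    refine ⟨(-(1 : ℚ) / (p : ℚ) ^ 2) * (j : ℚ) * (l : ℚ), ?_⟩
    have : ((Rat.castHom ℂ) ((-(1 : ℚ) / (p : ℚ) ^ 2) * (j : ℚ) * (l : ℚ)) : ℂ)
        = ((((-(1 : ℚ) / (p : ℚ) ^ 2) * (j : ℚ) * (l : ℚ) : ℚ)) : ℂ) := rfl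
    rw [this]
    push_cast
    ring
  have hSmem : (∑ k ∈ Finset.range p, ∑ j ∈ Finset.range p, ∑ l ∈ Finset.range p, f k j l) ∈ F := by
    rw [Finset.sum_comm]
    refine Subfield.sum_mem F fun j _ => ?_
    rw [Finset.sum_comm]
    refine Subfield.sum_mem F fun l _ => ?_
    have : ∑ k ∈ Finset.range p, f k j l
        = ((-(1 : ℂ) / (p : ℂ) ^ 2) * (j : ℂ) * (l : ℂ)) *
          ((∑ k ∈ Finset.range p, ω ^ ((k : ℤ) * (q * j + l + (q + 1))))
           + (∑ k ∈ Finset.range p, ω ^ ((k : ℤ) * (q * j + l + q)))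
           + (∑ k ∈ Finset.range p, ω ^ ((k : ℤ) * (q * j + l + 1)))
           + (∑ k ∈ Finset.range p, ω ^ ((k : ℤ) * (q * j + l)))) := by
      rw [hfdef]
      simp only [Finset.mul_sum, ← Finset.sum_add_distrib]
    rw [this]
    exact Subfield.mul_mem F (hc j l)
      (Subfield.add_mem F (Subfield.add_mem F (Subfield.add_mem F (hE _) (hE _)) (hE _)) (hE _))
  have h0mem : (∑ j ∈ Finset.range p, ∑ l ∈ Finset.range p, f 0 j l) ∈ F := by
    refine Subfield.sum_mem F fun j _ => Subfield.sum_mem F fun l _ => ?_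
    have : f 0 j l = ((-(1 : ℂ) / (p : ℂ) ^ 2) * (j : ℂ) * (l : ℂ)) * 4 := by
      rw [hfdef]
      norm_num
    rw [this]
    exact Subfield.mul_mem F (hc j l) ⟨4, by push_cast; rfl⟩
  have hsplit : ∑ k ∈ Finset.range p, (∑ j ∈ Finset.range p, ∑ l ∈ Finset.range p, f k j l)
      = (∑ j ∈ Finset.range p, ∑ l ∈ Finset.range p, f 0 j l)
        + ∑ k ∈ Finset.Ico 1 p, (∑ j ∈ Finset.range p, ∑ l ∈ Finset.range p, f k j l) := by
    rw [Finset.range_eq_Ico, Finset.sum_eq_sum_Ico_succ_bot (by omega)]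
  have hmem : (∑ k ∈ Finset.Ico 1 p,
      ((Real.cot ((k : ℝ) * (q : ℝ) * Real.pi / p) *
        Real.cot ((k : ℝ) * ((1:ℤ) : ℝ) * Real.pi / p) : ℝ) : ℂ)) ∈ F := by
    rw [Finset.sum_congr rfl claimA]
    have : ∑ k ∈ Finset.Ico 1 p, (∑ j ∈ Finset.range p, ∑ l ∈ Finset.range p, f k j l)
        = (∑ k ∈ Finset.range p, (∑ j ∈ Finset.range p, ∑ l ∈ Finset.range p, f k j l))
          - (∑ j ∈ Finset.range p, ∑ l ∈ Finset.range p, f 0 j l) := by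
      rw [hsplit]; ring
    rw [this]
    exact Subfield.sub_mem F hSmem h0mem
  obtain ⟨r, hr⟩ := hmem
  refine ⟨(1 / (4 * (p : ℚ))) * r, ?_⟩
  have hsum : (∑ k ∈ Finset.Ico 1 p,
      Real.cot ((k : ℝ) * (q : ℝ) * Real.pi / p) *
        Real.cot ((k : ℝ) * ((1:ℤ) : ℝ) * Real.pi / p)) = (r : ℝ) := by
    have h1 : ((Rat.castHom ℂ) r : ℂ) = ((r : ℝ) : ℂ) := by
      simp [Rat.castHom]
    rw [← Complex.ofReal_sum, h1] at hr
    exact_mod_cast hr.symm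
  rw [hsum]
  push_cast
  ring

theorem dsum_rational (p : ℕ) (hp : 1 ≤ p) (q : ℤ) (hq : IsCoprime q (p : ℤ)) :
    ∃ r : ℚ, dsum p q 1 = r := by
  obtain ⟨r, hr⟩ := dsum_rational' p hp q hq
  exact ⟨r, by rw [dsum]; exact hr⟩
end
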